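/- Let ψ¹_1,…,ψ¹_D be a linearly independent family spanning a D-dimensional complex Hilbert space H, and ψ²_1,…,ψ²_D unit vectors in H with all pairwise inner products ⟨ψ²_{j'}, ψ²_j⟩ nonzero. If the matrix M with M_{j j'} = ⟨ψ¹_{j'}, ψ¹_j⟩ / ⟨ψ²_{j'}, ψ²_j⟩ is positive semidefinite, then there exist linear operators A_1,…,A_D on H with ∑_k A_k† A_k = 1 and, for each j and k, A_k ψ¹_j is a scalar multiple of ψ²_j with ∑_k A_k |ψ¹_j⟩⟨ψ¹_j| A_k† = |ψ²_j⟩⟨ψ²_j|. -/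

import Mathlib

open scoped InnerProductSpace ComplexOrder Matrix

/-- The rank-one operator `|φ⟩⟨χ| : v ↦ ⟨χ, v⟩ φ`. -/
noncomputable def outer {H : Type*} [NormedAddCommGroup H] [InnerProductSpace ℂ H]
    (φ χ : H) : H →ₗ[ℂ] H where
  toFun v := ⟪χ, v⟫_ℂ • φ
  map_add' x y := by simp [inner_add_right, add_smul]
  map_smul' c x := by simp [inner_smul_right, smul_smul]

@[simp] lemma outer_apply {H : Type*} [NormedAddCommGroup H] [InnerProductSpace ℂ H]
    (φ χ v : H) : outer φ χ v = ⟪χ, v⟫_ℂ • φ := rfl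

theorem stmt_5 {H : Type*} [NormedAddCommGroup H] [InnerProductSpace ℂ H]
    [FiniteDimensional ℂ H] {D : ℕ} (hD : Module.finrank ℂ H = D)
    (ψ1 ψ2 : Fin D → H)
    (hli : LinearIndependent ℂ ψ1)
    (h1 : ∀ j, ‖ψ1 j‖ = 1) (h2 : ∀ j, ‖ψ2 j‖ = 1)
    (hnz : ∀ j j', ⟪ψ2 j', ψ2 j⟫_ℂ ≠ 0)
    (hM : (Matrix.of fun j j' : Fin D =>
        ⟪ψ1 j', ψ1 j⟫_ℂ / ⟪ψ2 j', ψ2 j⟫_ℂ).PosSemidef) :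
    ∃ A : Fin D → (H →ₗ[ℂ] H),
      (∑ k, LinearMap.adjoint (A k) ∘ₗ A k = LinearMap.id) ∧
      (∀ j k, ∃ c : ℂ, A k (ψ1 j) = c • ψ2 j) ∧
      (∀ j, ∑ k, (A k) ∘ₗ outer (ψ1 j) (ψ1 j) ∘ₗ LinearMap.adjoint (A k)
          = outer (ψ2 j) (ψ2 j)) := by
  classical
  have hcard : Fintype.card (Fin D) = Module.finrank ℂ H := by simp [hD]
  let b : Module.Basis (Fin D) ℂ H :=
    Module.Basis.mk hli (le_of_eq (hli.span_eq_top_of_card_eq_finrank' hcard).symm)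
  have hb : ∀ i, b i = ψ1 i := fun i => Module.Basis.mk_apply _ _ i
  -- dual vectors
  set ψd : Fin D → H := fun j =>
    (InnerProductSpace.toDual ℂ H).symm (LinearMap.toContinuousLinearMap (b.coord j)) with hψddef
  have hψd : ∀ j v, ⟪ψd j, v⟫_ℂ = b.coord j v := fun j v => by
    simp [hψddef, InnerProductSpace.toDual_symm_apply]
  have hψd1 : ∀ j i, ⟪ψd j, ψ1 i⟫_ℂ = if j = i then 1 else 0 := by
    intro j i
    rw [hψd, ← hb i]
    simp [Module.Basis.coord_apply, Module.Basis.repr_self, Finsupp.single_apply, eq_comm]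
  have h1ψd : ∀ i j, ⟪ψ1 i, ψd j⟫_ℂ = if j = i then 1 else 0 := by
    intro i j
    rw [← inner_conj_symm, hψd1]
    split <;> simp
  -- expansion in the dual family
  have hexp : ∀ v : H, ∑ j, ⟪ψ1 j, v⟫_ℂ • ψd j = v := by
    intro v
    have hz : ∀ i, ⟪ψ1 i, (∑ j, ⟪ψ1 j, v⟫_ℂ • ψd j) - v⟫_ℂ = 0 := by
      intro i
      rw [inner_sub_right, inner_sum]
      simp only [inner_smul_right, h1ψd]
      rw [Finset.sum_eq_single i]
      · simp
      · intro j _ hj; simp [hj]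
      · simp
    have hz' : ∀ w : H, ⟪w, (∑ j, ⟪ψ1 j, v⟫_ℂ • ψd j) - v⟫_ℂ = 0 := by
      intro w
      have hw := b.sum_repr w
      rw [← hw]
      rw [sum_inner]
      simp only [inner_smul_left]
      rw [Finset.sum_eq_zero]
      intro i _
      rw [hb, hz]
      simp
    have := hz' ((∑ j, ⟪ψ1 j, v⟫_ℂ • ψd j) - v)
    rw [inner_self_eq_zero] at this
    exact sub_eq_zero.mp this
  -- matrix factorization
  open scoped MatrixOrder in obtain ⟨B, hB⟩ := CStarAlgebra.nonneg_iff_eq_star_mul_self.mp hM.transpose.nonneg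
  have hBM : ∀ j j', (∑ k, (starRingEnd ℂ) (B k j) * B k j')
      = ⟪ψ1 j, ψ1 j'⟫_ℂ / ⟪ψ2 j, ψ2 j'⟫_ℂ := by
    intro j j'
    have := congrFun (congrFun hB.symm j) j'
    simpa [Matrix.mul_apply, Matrix.conjTranspose_apply, Matrix.transpose_apply] using this
  have hBinner : ∀ j j', (∑ k, (starRingEnd ℂ) (B k j) * B k j') * ⟪ψ2 j, ψ2 j'⟫_ℂ
      = ⟪ψ1 j, ψ1 j'⟫_ℂ := by
    intro j j'
    rw [hBM, div_mul_cancel₀ _ (hnz j' j)]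
  -- the operators
  set A : Fin D → (H →ₗ[ℂ] H) := fun k => ∑ j, B k j • outer (ψ2 j) (ψd j) with hAdef
  have hAapp : ∀ k v, A k v = ∑ j, (B k j * ⟪ψd j, v⟫_ℂ) • ψ2 j := by
    intro k v
    simp [hAdef, LinearMap.sum_apply, mul_smul]
  have hAψ1 : ∀ k i, A k (ψ1 i) = B k i • ψ2 i := by
    intro k i
    rw [hAapp]
    rw [Finset.sum_eq_single i]
    · simp [hψd1]
    · intro j _ hj; simp [hψd1, hj]
    · simp
  have hAadj : ∀ k, LinearMap.adjoint (A k)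
      = ∑ j, (starRingEnd ℂ) (B k j) • outer (ψd j) (ψ2 j) := by
    intro k
    symm
    rw [LinearMap.eq_adjoint_iff]
    intro x y
    rw [hAapp, inner_sum]
    simp only [LinearMap.sum_apply, LinearMap.smul_apply, outer_apply, sum_inner,
      inner_smul_left, inner_smul_right, smul_smul]
    refine Finset.sum_congr rfl fun j _ => ?_
    simp only [map_mul, RingHomCompTriple.comp_apply, RingHom.id_apply, starRingEnd_self_apply,
      inner_conj_symm]
    ring
  have hAadjapp : ∀ k v, LinearMap.adjoint (A k) v
      = ∑ j, ((starRingEnd ℂ) (B k j) * ⟪ψ2 j, v⟫_ℂ) • ψd j := by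
    intro k v
    rw [hAadj]
    simp [LinearMap.sum_apply, mul_smul]
  refine ⟨A, ?_, ?_, ?_⟩
  · -- sum A† A = 1
    apply b.ext
    intro i
    rw [hb]
    simp only [LinearMap.sum_apply, LinearMap.comp_apply, LinearMap.id_apply]
    calc ∑ k, LinearMap.adjoint (A k) (A k (ψ1 i))
        = ∑ k, ∑ j, ((starRingEnd ℂ) (B k j) * B k i * ⟪ψ2 j, ψ2 i⟫_ℂ) • ψd j := by
          refine Finset.sum_congr rfl fun k _ => ?_
          rw [hAψ1, map_smul, hAadjapp]
          rw [Finset.smul_sum]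
          refine Finset.sum_congr rfl fun j _ => ?_
          rw [smul_smul]
          ring_nf
      _ = ∑ j, ((∑ k, (starRingEnd ℂ) (B k j) * B k i) * ⟪ψ2 j, ψ2 i⟫_ℂ) • ψd j := by
          rw [Finset.sum_comm]
          refine Finset.sum_congr rfl fun j _ => ?_
          rw [Finset.sum_mul, ← Finset.sum_smul]
      _ = ∑ j, ⟪ψ1 j, ψ1 i⟫_ℂ • ψd j := by
          refine Finset.sum_congr rfl fun j _ => ?_
          rw [hBinner]
      _ = ψ1 i := hexp (ψ1 i)
  · intro j k
    exact ⟨B k j, hAψ1 k j⟩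
  · intro j
    apply LinearMap.ext
    intro v
    simp only [LinearMap.sum_apply, LinearMap.comp_apply, outer_apply]
    have hstep : ∀ k, A k (⟪ψ1 j, LinearMap.adjoint (A k) v⟫_ℂ • ψ1 j)
        = ((starRingEnd ℂ) (B k j) * B k j * ⟪ψ2 j, v⟫_ℂ) • ψ2 j := by
      intro k
      rw [map_smul, hAψ1, LinearMap.adjoint_inner_right, hAψ1, inner_smul_left, smul_smul]
      ring_nf
    rw [Finset.sum_congr rfl fun k _ => hstep k]
    rw [← Finset.sum_smul, ← Finset.sum_mul]
    rw [show (∑ k, (starRingEnd ℂ) (B k j) * B k j) = 1 by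
      have := hBinner j j
      rw [inner_self_eq_norm_sq_to_K, inner_self_eq_norm_sq_to_K, h1, h2] at this
      norm_num at this
      exact this]
    rw [one_mul]
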